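/- Let S be an isometry on a Hilbert space H with S*ⁿ → 0 in the strong operator topology, and let A : H →L[ℂ] H satisfy A = Sᵐ A S*ᵐ for all m ∈ ℕ. Then A = 0. -/
import Mathlib


open ContinuousLinearMap Filter
open scoped InnerProductSpace

theorem eq_zero_of_shift_compression {H : Type*} [NormedAddCommGroup H]
    [InnerProductSpace ℂ H] [CompleteSpace H] (S A : H →L[ℂ] H)
    (hS : adjoint S * S = 1)
    (hSstrong : ∀ x : H, Tendsto (fun n : ℕ => ‖((adjoint S) ^ n) x‖) atTop (nhds 0))
    (hA : ∀ m : ℕ, A = S ^ m * A * (adjoint S) ^ m) :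
    A = 0 := by
  have hiso : ∀ y : H, ‖S y‖ = ‖y‖ := by
    intro y
    have h1 : (⟪S y, S y⟫_ℂ) = ⟪y, y⟫_ℂ := by
      rw [← ContinuousLinearMap.adjoint_inner_left]
      have : (adjoint S * S) y = y := by rw [hS]; simp
      rw [show (adjoint S) (S y) = (adjoint S * S) y from rfl, this]
    rw [inner_self_eq_norm_sq_to_K, inner_self_eq_norm_sq_to_K] at h1
    have h2 : (‖S y‖ : ℝ) ^ 2 = ‖y‖ ^ 2 := by exact_mod_cast h1
    nlinarith [norm_nonneg (S y), norm_nonneg y]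
  have hisom : ∀ (m : ℕ) (y : H), ‖(S ^ m) y‖ = ‖y‖ := by
    intro m
    induction m with
    | zero => intro y; simp
    | succ n ih =>
      intro y
      rw [pow_succ, show (S ^ n * S) y = (S ^ n) (S y) from rfl, ih, hiso]
  ext x
  simp only [ContinuousLinearMap.zero_apply]
  have key : ∀ m : ℕ, ‖A x‖ ≤ ‖A‖ * ‖((adjoint S) ^ m) x‖ := by
    intro m
    calc ‖A x‖ = ‖(S ^ m * A * (adjoint S) ^ m) x‖ := by rw [← hA m]
      _ = ‖(S ^ m) (A (((adjoint S) ^ m) x))‖ := rfl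
      _ = ‖A (((adjoint S) ^ m) x)‖ := hisom m _
      _ ≤ ‖A‖ * ‖((adjoint S) ^ m) x‖ := A.le_opNorm _
  have hlim : Tendsto (fun m : ℕ => ‖A‖ * ‖((adjoint S) ^ m) x‖) atTop (nhds 0) := by
    simpa using (hSstrong x).const_mul ‖A‖
  have : ‖A x‖ ≤ 0 := le_of_tendsto_of_tendsto' tendsto_const_nhds hlim key
  simpa using le_antisymm this (norm_nonneg _)
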